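/- In the Loday–Ronco algebra of planar binary trees, the product of n copies of the one-vertex tree, (1) ∗ (1) ∗ ⋯ ∗ (1), equals the sum of all planar binary trees of order n (each with coefficient 1). -/

import Mathlib

/-- Planar binary trees: `leaf` is the tree `|` with no internal vertex,
`node t₁ t₂` is the grafting `t₁ ∨ t₂`. -/
inductive PBT where
  | leaf : PBT
  | node : PBT → PBT → PBT
deriving DecidableEq

namespace PBT

/-- The order of a planar binary tree: its number of internal vertices. -/
def order : PBT → ℕ
  | leaf => 0
  | node a b => order a + order b + 1

/-- The number of leaves of a planar binary tree. -/
def leaves : PBT → ℕ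
  | leaf => 1
  | node a b => leaves a + leaves b

end PBT

/-- The Loday–Ronco product `∗` on basis trees, with values in the free `k`-module
on planar binary trees: `t ∗ | = | ∗ t = t` and
`(t₁∨t₂) ∗ (t'₁∨t'₂) = t₁ ∨ (t₂ ∗ (t'₁∨t'₂)) + ((t₁∨t₂) ∗ t'₁) ∨ t'₂`. -/
noncomputable def PBT.star (k : Type*) [CommRing k] : PBT → PBT → (PBT →₀ k)
  | .leaf, t => Finsupp.single t 1
  | .node a b, .leaf => Finsupp.single (.node a b) 1
  | .node a b, .node c d =>
      Finsupp.mapDomain (fun u => PBT.node a u) (PBT.star k b (.node c d))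
      + Finsupp.mapDomain (fun u => PBT.node u d) (PBT.star k (.node a b) c)
termination_by t s => t.order + s.order
decreasing_by all_goals simp [PBT.order] <;> omega

/-- The bilinear extension of `PBT.star` to the free `k`-module `k[Y^∞]` on
planar binary trees. -/
noncomputable def PBT.starL (k : Type*) [CommRing k] (x y : PBT →₀ k) : PBT →₀ k :=
  x.sum fun t a => y.sum fun s b => (a * b) • PBT.star k t s

/-- The `n`-fold product `(1) ∗ (1) ∗ ⋯ ∗ (1)` of the one-vertex tree `(1) = |∨|`. -/
noncomputable def starN (k : Type*) [CommRing k] : ℕ → (PBT →₀ k)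
  | 0 => Finsupp.single .leaf 1
  | n + 1 => PBT.starL k (Finsupp.single (PBT.node .leaf .leaf) 1) (starN k n)

/-- Delete the lowest internal vertex on the left spine. -/
def del : PBT → PBT
  | .leaf => .leaf
  | .node .leaf b => b
  | .node (.node a1 a2) b => .node (del (.node a1 a2)) b

lemma order_del : ∀ u : PBT, u ≠ .leaf → (del u).order + 1 = u.order := by
  intro u hu
  induction u with
  | leaf => exact absurd rfl hu
  | node a b ih ihb =>
    cases a with
    | leaf => simp [del, PBT.order]
    | node a1 a2 =>
      have := ih (by simp)
      simp only [del, PBT.order] at *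
      omega

lemma starOneApply (k : Type*) [CommRing k] (t u : PBT) :
    PBT.star k (.node .leaf .leaf) t u = if u ≠ .leaf ∧ del u = t then 1 else 0 := by
  induction t generalizing u with
  | leaf =>
    rw [PBT.star, Finsupp.single_apply]
    cases u with
    | leaf => simp [del]
    | node a b =>
      cases a <;> cases b <;> simp [del]
  | node c d ihc ihd =>
    rw [PBT.star]
    rw [show PBT.star k PBT.leaf (c.node d) = Finsupp.single (c.node d) 1 from by rw [PBT.star]]
    rw [Finsupp.add_apply]
    have h1 : (Finsupp.mapDomain (fun u => PBT.node .leaf u)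
        (Finsupp.single (PBT.node c d) (1:k))) u
        = if u = PBT.node .leaf (PBT.node c d) then 1 else 0 := by
      rw [Finsupp.mapDomain_single, Finsupp.single_apply]
      simp [eq_comm]
    have hinj : Function.Injective (fun u : PBT => PBT.node u d) := by
      intro x y h; simpa using h
    rw [h1]
    cases u with
    | leaf =>
      have h2 : (Finsupp.mapDomain (fun u : PBT => PBT.node u d)
          (PBT.star k (.node .leaf .leaf) c)) PBT.leaf = 0 := by
        apply Finsupp.mapDomain_notin_range
        rintro ⟨x, hx⟩; simp at hx
      rw [h2]; simp
    | node a b =>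
      by_cases hbd : b = d
      · subst hbd
        rw [show (PBT.node a b) = (fun u : PBT => PBT.node u b) a from rfl,
          Finsupp.mapDomain_apply hinj, ihc]
        cases a with
        | leaf => simp [del]
        | node a1 a2 =>
          simp only [del]
          have : ¬ (PBT.node a1 a2).node b = PBT.leaf.node (c.node b) := by simp
          rw [if_neg this]
          by_cases h : del (PBT.node a1 a2) = c
          · simp [h]
          · simp [h, PBT.node.injEq]
      · have h2 : (Finsupp.mapDomain (fun u : PBT => PBT.node u d)
            (PBT.star k (.node .leaf .leaf) c)) (PBT.node a b) = 0 := by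
          apply Finsupp.mapDomain_notin_range
          rintro ⟨x, hx⟩
          simp only at hx
          cases hx; exact hbd rfl
        rw [h2]
        cases a with
        | leaf => simp [del, hbd, PBT.node.injEq]
        | node a1 a2 => simp [del, hbd, PBT.node.injEq]

/-- In the Loday–Ronco algebra, the product of `n` copies of the one-vertex tree
equals the sum of all planar binary trees of order `n`, each with coefficient `1`. -/
theorem stmt8 (k : Type*) [CommRing k] [CharZero k] (n : ℕ) (t : PBT) :
    starN k n t = if t.order = n then 1 else 0 := by
  induction n generalizing t with
  | zero =>
    rw [starN, Finsupp.single_apply]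
    cases t <;> simp [PBT.order, eq_comm]
  | succ n ih =>
    rw [starN, PBT.starL, Finsupp.sum_single_index (by simp), Finsupp.sum_apply]
    by_cases htl : t = PBT.leaf
    · subst htl
      rw [Finsupp.sum, Finset.sum_eq_zero]
      · simp [PBT.order]
      · intro s _
        rw [Finsupp.smul_apply, starOneApply]; simp
    · have hord := order_del t htl
      have hval : ∀ s, (((1:k) * starN k n s) • PBT.star k (PBT.node .leaf .leaf) s) t
          = starN k n s * (if del t = s then 1 else 0) := by
        intro s; rw [Finsupp.smul_apply, starOneApply]; simp [htl]
      rw [Finsupp.sum]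
      simp only [hval]
      by_cases hmem : del t ∈ (starN k n).support
      · rw [Finset.sum_eq_single (del t)]
        · rw [ih, if_pos rfl, mul_one]
          by_cases h : t.order = n + 1
          · rw [if_pos (by omega), if_pos h]
          · rw [if_neg (by omega), if_neg h]
        · intro s _ hs; simp [Ne.symm hs]
        · intro h; exact absurd hmem h
      · have h0 : starN k n (del t) = 0 := Finsupp.notMem_support_iff.mp hmem
        have hdo : (del t).order ≠ n := by
          intro h; rw [ih] at h0; simp [h] at h0
        rw [Finset.sum_eq_zero, if_neg (by omega)]
        intro s hs
        by_cases h : del t = s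
        · rw [← h]; simp [h0]
        · simp [h]
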